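/- Let n = 2^k with k ≥ 1. Then the number of vectors x ∈ 𝔽₂ⁿ in which every run has length at most k + 1 (that is, at most log₂(2n)) is at least 2^{n−1}. Equivalently, the redundancy n − log₂|S_n(log₂(2n))| of the log₂(2n)-RLL(n) constraint is at most 1. -/

import Mathlib

/-- The `b`-burst-deletion ball of `x`: all vectors obtained from `x` by deleting
`b` consecutive coordinates. -/
def delBall (b : ℕ) {n : ℕ} (x : Fin n → Bool) : Set (Fin (n - b) → Bool) :=
  { y | ∃ i ≤ n - b, ∀ j : Fin (n - b),
      y j = if (j : ℕ) < i
        then x ⟨(j : ℕ), by have := j.isLt; omega⟩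
        else x ⟨(j : ℕ) + b, by have := j.isLt; omega⟩ }

/-- The `b`-burst-insertion ball of `x`: all vectors `v` of length `n + b`
such that `x` is obtained from `v` by deleting `b` consecutive coordinates. -/
def insBall (b : ℕ) {n : ℕ} (x : Fin n → Bool) : Set (Fin (n + b) → Bool) :=
  { v | ∃ i ≤ n, ∀ j : Fin n,
      x j = if (j : ℕ) < i
        then v ⟨(j : ℕ), by have := j.isLt; omega⟩
        else v ⟨(j : ℕ) + b, by have := j.isLt; omega⟩ }

/-- Number of runs (maximal blocks of consecutive equal coordinates) of a binary vector. -/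
def numRuns {m : ℕ} (z : Fin m → Bool) : ℕ :=
  (Finset.univ.filter (fun i : Fin m =>
    (i : ℕ) = 0 ∨ z i ≠ z ⟨(i : ℕ) - 1, by have := i.isLt; omega⟩)).card

/-- Every run of `z` has length at most `f`: every window of `f + 1` consecutive
coordinates contains two different values. -/
def maxRunLe {m : ℕ} (f : ℕ) (z : Fin m → Bool) : Prop :=
  ∀ i : ℕ, ∀ hi : i + f < m, ∃ j : ℕ, ∃ hj : j ≤ f,
    z ⟨i + j, by omega⟩ ≠ z ⟨i, by omega⟩

/-- The Varshamov–Tenengolts code `VT_a(n)`. -/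
def VT (n a : ℕ) : Set (Fin n → Bool) :=
  { x | (∑ i : Fin n, ((i : ℕ) + 1) * (x i).toNat) ≡ a [MOD n + 1] }

/-- The shifted Varshamov–Tenengolts code `SVT_{c,d}(n,P)`. -/
def SVT (n P c d : ℕ) : Set (Fin n → Bool) :=
  { x | (∑ i : Fin n, ((i : ℕ) + 1) * (x i).toNat) ≡ c [MOD P] ∧
        (∑ i : Fin n, (x i).toNat) ≡ d [MOD 2] }

/-- The `(2,1)`-burst-correcting code `C_{2,1}(n,a,c)`. -/
def C21 (n a c : ℕ) : Set (Fin n → Bool) :=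
  { x | (∑ i : Fin n, (x i).toNat) ≡ c [MOD 4] ∧
        (∑ i : Fin n, ((i : ℕ) + 1) * (x i).toNat) ≡ a [MOD 2 * n - 1] }

/-- Row `r` (0-indexed) of the `b × (n / b)` array `A_b(x)`: the entry in
column `j` (0-indexed) is `x (j * b + r)`. -/
def arrRow {n : ℕ} (b : ℕ) (x : Fin n → Bool) (r : Fin b) : Fin (n / b) → Bool :=
  fun j => x ⟨(j : ℕ) * b + (r : ℕ), by
    have hj : (j : ℕ) + 1 ≤ n / b := j.isLt
    have hr := r.isLt
    have h1 : ((j : ℕ) + 1) * b ≤ n / b * b := Nat.mul_le_mul_right b hj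
    have h2 : n / b * b ≤ n := Nat.div_mul_le_self n b
    have h3 : ((j : ℕ) + 1) * b = (j : ℕ) * b + b := by ring
    omega⟩

/-- Non-consecutive burst deletion ball: all vectors obtained from `x` by deleting
`a` coordinates whose positions all lie within a window of `b` consecutive positions. -/
def ncDelBall (a b : ℕ) {n : ℕ} (x : Fin n → Bool) : Set (Fin (n - a) → Bool) :=
  { y | ∃ f : Fin (n - a) → Fin n, StrictMono f ∧ (∀ j, y j = x (f j)) ∧
      ∃ i : ℕ, ∀ p : Fin n, p ∉ Set.range f → i ≤ (p : ℕ) ∧ (p : ℕ) < i + b }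

/-- Non-consecutive burst insertion ball: all vectors `v` of length `n + a` from which
`x` is obtained by a non-consecutive deletion burst of `a` deletions within a window
of `b` consecutive positions. -/
def ncInsBall (a b : ℕ) {n : ℕ} (x : Fin n → Bool) : Set (Fin (n + a) → Bool) :=
  { v | ∃ f : Fin n → Fin (n + a), StrictMono f ∧ (∀ j, x j = v (f j)) ∧
      ∃ i : ℕ, ∀ p : Fin (n + a), p ∉ Set.range f → i ≤ (p : ℕ) ∧ (p : ℕ) < i + b }

/-- The vector obtained from `x` by deleting the coordinate at (0-indexed) position `k`. -/
def delOne {n : ℕ} (x : Fin n → Bool) (k : ℕ) : Fin (n - 1) → Bool :=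
  fun j => if (j : ℕ) < k
    then x ⟨(j : ℕ), by have := j.isLt; omega⟩
    else x ⟨(j : ℕ) + 1, by have := j.isLt; omega⟩

/-- The `(2,1)`-burst ball of `x`: all results of deleting two adjacent coordinates
of `x` and inserting one bit at the same position. -/
def d21Ball {n : ℕ} (x : Fin n → Bool) : Set (Fin (n - 1) → Bool) :=
  { y | ∃ i : ℕ, ∃ hi : i + 1 < n, ∃ a : Bool,
      ∀ j : Fin (n - 1), y j =
        if (j : ℕ) < i then x ⟨(j : ℕ), by have := j.isLt; omega⟩
        else if (j : ℕ) = i then a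
        else x ⟨(j : ℕ) + 1, by have := j.isLt; omega⟩ }

lemma ncard_biUnion_le_aux {α : Type*} [Finite α] (S : Finset ℕ) (B : ℕ → Set α) :
    (⋃ i ∈ S, B i).ncard ≤ ∑ i ∈ S, (B i).ncard := by
  classical
  induction S using Finset.induction_on with
  | empty => simp
  | insert a s hx ih =>
    rw [Finset.set_biUnion_insert, Finset.sum_insert hx]
    exact le_trans (Set.ncard_union_le _ _) (Nat.add_le_add_left ih _)

-- aux above

theorem rll_log2n_redundancy_le_one (k : ℕ) (hk : 1 ≤ k) (n : ℕ) (hn : n = 2 ^ k) :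
    2 ^ (n - 1) ≤ Set.ncard { x : Fin n → Bool | maxRunLe (k + 1) x } := by

  classical
  set m := k + 1 with hm
  have hkn : k + 1 ≤ n := by
    have := Nat.lt_two_pow_self (n := k)
    omega
  have hn1 : 1 ≤ n := by omega
  set B : ℕ → Set (Fin n → Bool) := fun i =>
    { x | ∀ j : ℕ, j ≤ m → ∀ hj : i + j < n, ∀ h0 : i < n,
        x ⟨i + j, hj⟩ = x ⟨i, h0⟩ } with hBdef
  set s : Set (Fin n → Bool) := { x | maxRunLe m x } with hsdef
  have hsub : sᶜ ⊆ ⋃ i ∈ Finset.range (n - m), B i := by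
    intro x hx
    simp only [hsdef, Set.mem_compl_iff, Set.mem_setOf_eq, maxRunLe] at hx
    push_neg at hx
    obtain ⟨i, hi, h⟩ := hx
    have him : i < n - m := by omega
    refine Set.mem_biUnion (Finset.mem_range.mpr him) ?_
    intro j hjm hj h0
    exact h j hjm
  have hBcard : ∀ i ∈ Finset.range (n - m), (B i).ncard ≤ 2 ^ (n - m) := by
    intro i hi
    rw [Finset.mem_range] at hi
    have him : i + m < n := by omega
    have key : (B i).ncard ≤ (Set.univ : Set (Fin (n - m) → Bool)).ncard := by
      apply Set.ncard_le_ncard_of_injOn (fun x (j : Fin (n - m)) =>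
        if (j : ℕ) ≤ i then x ⟨(j : ℕ), by have := j.isLt; omega⟩
        else x ⟨(j : ℕ) + m, by have := j.isLt; omega⟩)
      · intro x _; trivial
      · intro x hx y hy hxy
        funext p
        have hp : (p : ℕ) < n := p.isLt
        have hget : ∀ (z : Fin n → Bool) (q : ℕ) (hq : q < n), z ⟨q, hq⟩ = z p → True := fun _ _ _ _ => trivial
        rcases le_or_gt (p : ℕ) i with hpi | hpi
        · have hpm : (p : ℕ) < n - m := by omega
          have := congrFun hxy ⟨(p : ℕ), hpm⟩
          simp only [hpi, if_pos] at this
          simpa [Fin.eta] using this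
        · have hii : i < n - m := by omega
          have hI := congrFun hxy ⟨i, hii⟩
          simp only [le_refl, if_pos] at hI
          rcases le_or_gt (p : ℕ) (i + m) with hple | hpgt
          · have hx' := hx ((p : ℕ) - i) (by omega) (by omega) (by omega)
            have hy' := hy ((p : ℕ) - i) (by omega) (by omega) (by omega)
            have hxp : x p = x ⟨i, by omega⟩ := by
              have : p = ⟨i + ((p : ℕ) - i), by omega⟩ := by
                apply Fin.ext; simp; omega
              rw [this]; exact hx'
            have hyp : y p = y ⟨i, by omega⟩ := by
              have : p = ⟨i + ((p : ℕ) - i), by omega⟩ := by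
                apply Fin.ext; simp; omega
              rw [this]; exact hy'
            rw [hxp, hyp]
            convert hI using 2 <;> apply Fin.ext <;> simp
          · have hq : (p : ℕ) - m < n - m := by omega
            have hqi : ¬ ((p : ℕ) - m ≤ i) := by omega
            have := congrFun hxy ⟨(p : ℕ) - m, hq⟩
            simp only [hqi, if_neg, not_false_iff] at this
            have hep : ((p : ℕ) - m) + m = (p : ℕ) := by omega
            have hpe : p = ⟨((p : ℕ) - m) + m, by omega⟩ := by
              apply Fin.ext; simp [hep]
            rw [hpe]
            exact this
    have huniv : (Set.univ : Set (Fin (n - m) → Bool)).ncard = 2 ^ (n - m) := by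
      rw [Set.ncard_univ, Nat.card_eq_fintype_card]
      simp [Fintype.card_fun]
    omega
  have hbad : sᶜ.ncard ≤ (n - m) * 2 ^ (n - m) := by
    calc sᶜ.ncard ≤ (⋃ i ∈ Finset.range (n - m), B i).ncard :=
          Set.ncard_le_ncard hsub (Set.toFinite _)
      _ ≤ ∑ i ∈ Finset.range (n - m), (B i).ncard := ncard_biUnion_le_aux _ _
      _ ≤ ∑ _i ∈ Finset.range (n - m), 2 ^ (n - m) := Finset.sum_le_sum hBcard
      _ = (n - m) * 2 ^ (n - m) := by simp [Finset.sum_const, mul_comm]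
  have hbad2 : (n - m) * 2 ^ (n - m) ≤ 2 ^ (n - 1) := by
    have h1 : n - m ≤ 2 ^ k := by omega
    have h2 : n - 1 = k + (n - m) := by omega
    calc (n - m) * 2 ^ (n - m) ≤ 2 ^ k * 2 ^ (n - m) := Nat.mul_le_mul_right _ h1
      _ = 2 ^ (n - 1) := by rw [h2, pow_add]
  have hcompl : s.ncard + sᶜ.ncard = 2 ^ n := by
    rw [Set.ncard_add_ncard_compl, Nat.card_eq_fintype_card]
    simp [Fintype.card_fun]
  have h2n : 2 ^ n = 2 ^ (n - 1) + 2 ^ (n - 1) := by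
    obtain ⟨n', rfl⟩ : ∃ n', n = n' + 1 := ⟨n - 1, by omega⟩
    simp only [Nat.add_sub_cancel, pow_succ]
    ring
  omega
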